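/- For any n×m real matrix A, ω_{n,m}(A) ≥ (m·ω_{m,n}(ᵗA) + m − 1) / ((n − 1)·ω_{m,n}(ᵗA) + n). -/

import Mathlib

open scoped ENNReal
open Matrix

/-- Distance from a real number to the nearest integer. -/
noncomputable def nearInt (t : ℝ) : ℝ := |t - round t|

/-- The system `‖Ax‖ ≤ X^(-w)`, `|x| ≤ X` has a nonzero integer solution `x ∈ ℤᵐ`. -/
def MatSol {n m : ℕ} (A : Matrix (Fin n) (Fin m) ℝ) (X w : ℝ) : Prop :=
  ∃ x : Fin m → ℤ, x ≠ 0 ∧ (∀ j, (|x j| : ℝ) ≤ X) ∧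
    ∀ i, nearInt (∑ j, A i j * x j) ≤ X ^ (-w)

/-- The ordinary exponent `ω_{n,m}(A)`: supremum of the `w` for which the system has a
nonzero solution for arbitrarily large `X`. -/
noncomputable def oexp {n m : ℕ} (A : Matrix (Fin n) (Fin m) ℝ) : ℝ≥0∞ :=
  sSup {w : ℝ≥0∞ | ∃ r : ℝ, w = ENNReal.ofReal r ∧
    ∀ X₀ : ℝ, ∃ X : ℝ, X₀ ≤ X ∧ MatSol A X r}

/-- The uniform exponent `ŵ_{n,m}(A)`: supremum of the `w` for which the system has a
nonzero solution for all sufficiently large `X`. -/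
noncomputable def uexp {n m : ℕ} (A : Matrix (Fin n) (Fin m) ℝ) : ℝ≥0∞ :=
  sSup {w : ℝ≥0∞ | ∃ r : ℝ, w = ENNReal.ofReal r ∧
    ∃ X₀ : ℝ, ∀ X : ℝ, X₀ ≤ X → MatSol A X r}


section DysonAux

open MeasureTheory Set

lemma nearInt_nonneg (t : ℝ) : 0 ≤ nearInt t := abs_nonneg _

lemma nearInt_le_half (t : ℝ) : nearInt t ≤ 1/2 := abs_sub_round t

lemma nearInt_le_abs_sub (t : ℝ) (k : ℤ) : nearInt t ≤ |t - (k : ℝ)| := by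
  rcases eq_or_ne k (round t) with h | h
  · simp [nearInt, h]
  · have h1 : (1 : ℝ) ≤ |(k : ℝ) - (round t : ℝ)| := by
      rw [← Int.cast_sub, ← Int.cast_abs]
      exact_mod_cast Int.one_le_abs (sub_ne_zero.mpr h)
    have h2 : nearInt t ≤ 1/2 := abs_sub_round t
    have h3 : |(k : ℝ) - (round t : ℝ)| ≤ |(k:ℝ) - t| + |t - round t| := by
      simpa using abs_sub_le (k : ℝ) t (round t)
    have : (1:ℝ) - 1/2 ≤ |(k:ℝ) - t| := by
      have := abs_sub_round t
      nlinarith [h1, h3, this]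
    rw [abs_sub_comm] at this
    linarith [h2]

lemma minkowski_forms {ι : Type} [Fintype ι] [DecidableEq ι]
    (T : Matrix ι ι ℝ) (hT : T.det ≠ 0) (c : ι → ℝ) (hc : ∀ i, 0 < c i)
    (h : |T.det| < ∏ i, c i) :
    ∃ v : ι → ℤ, v ≠ 0 ∧ ∀ i, |∑ j, T i j * (v j : ℝ)| < c i := by
  classical
  set b := Pi.basisFun ℝ ι
  set L : AddSubgroup (ι → ℝ) := (Submodule.span ℤ (Set.range (b : ι → ι → ℝ))).toAddSubgroup
  haveI : Countable L :=
    inferInstanceAs (Countable (Submodule.span ℤ (Set.range (b : ι → ι → ℝ))))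
  have fund : IsAddFundamentalDomain L (ZSpan.fundamentalDomain b) volume :=
    ZSpan.isAddFundamentalDomain' b volume
  set f : (ι → ℝ) →ₗ[ℝ] (ι → ℝ) := Matrix.toLin' T
  have hfdet : LinearMap.det f = T.det := LinearMap.det_toLin' T
  set box : Set (ι → ℝ) := Set.univ.pi fun i => Ioo (-(c i)) (c i)
  set s : Set (ι → ℝ) := f ⁻¹' box
  have h_symm : ∀ x ∈ s, -x ∈ s := by
    intro x hx
    simp only [s, Set.mem_preimage, map_neg] at hx ⊢
    intro i _
    have := hx i (Set.mem_univ i)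
    simp only [Set.mem_Ioo, Pi.neg_apply] at this ⊢
    constructor <;> linarith [this.1, this.2]
  have h_conv : Convex ℝ s := by
    refine Convex.linear_preimage (convex_pi fun i _ => convex_Ioo _ _) f
  have hbox : volume box = ENNReal.ofReal (∏ i, (2 * c i)) := by
    rw [show box = Set.univ.pi fun i => Ioo (-(c i)) (c i) from rfl]
    rw [volume_pi, Measure.pi_pi]
    rw [ENNReal.ofReal_prod_of_nonneg (fun i _ => mul_nonneg zero_le_two (hc i).le)]
    congr 1; ext i
    rw [Real.volume_Ioo]; congr 1; ring
  have hs_vol : volume s = ENNReal.ofReal (|T.det|⁻¹ * ∏ i, (2 * c i)) := by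
    rw [show s = f ⁻¹' box from rfl,
      Measure.addHaar_preimage_linearMap volume (by rw [hfdet]; exact hT) box, hbox,
      hfdet, abs_inv, ← ENNReal.ofReal_mul (inv_nonneg.mpr (abs_nonneg _))]
  have hcard : Module.finrank ℝ (ι → ℝ) = Fintype.card ι := Module.finrank_pi ℝ
  have hF : volume (ZSpan.fundamentalDomain b) = 1 := by
    rw [ZSpan.volume_fundamentalDomain]
    have : (Matrix.of (b : ι → ι → ℝ)) = (1 : Matrix ι ι ℝ) := by
      ext i j
      simp [b, Pi.basisFun_apply, Matrix.one_apply, Pi.single_apply, eq_comm]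
    rw [this, Matrix.det_one]
    simp
  have hlt : volume (ZSpan.fundamentalDomain b) * 2 ^ Module.finrank ℝ (ι → ℝ) < volume s := by
    rw [hF, one_mul, hs_vol, hcard]
    have h2 : (2 : ℝ≥0∞) ^ Fintype.card ι = ENNReal.ofReal (2 ^ Fintype.card ι) := by
      simp [ENNReal.ofReal_pow]
    rw [h2, ENNReal.ofReal_lt_ofReal_iff (mul_nonneg (inv_nonneg.mpr (abs_nonneg _))
      (Finset.prod_nonneg fun i _ => mul_nonneg zero_le_two (hc i).le) |>.lt_of_ne' (by
        have hdetpos : 0 < |T.det| := abs_pos.mpr hT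
        have : 0 < ∏ i, (2 * c i) := Finset.prod_pos fun i _ => by linarith [hc i]
        positivity))]
    have hprod : ∏ i, (2 * c i) = 2 ^ Fintype.card ι * ∏ i, c i := by
      rw [Finset.prod_mul_distrib, Finset.prod_const]
      simp
    rw [hprod]
    have hdetpos : 0 < |T.det| := abs_pos.mpr hT
    rw [← mul_assoc]
    have : (1:ℝ) < |T.det|⁻¹ * ∏ i, c i := by
      rw [← div_eq_inv_mul, lt_div_iff₀ hdetpos, one_mul]
      exact h
    nlinarith [pow_pos (zero_lt_two (α := ℝ)) (Fintype.card ι), this, hdetpos,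
      inv_pos.mpr hdetpos]
  obtain ⟨x, hx0, hxs⟩ := exists_ne_zero_mem_lattice_of_measure_mul_two_pow_lt_measure
    fund h_symm h_conv hlt
  -- extract integer coordinates
  have hmem : (x : ι → ℝ) ∈ Submodule.span ℤ (Set.range (b : ι → ι → ℝ)) := x.2
  have hint : ∀ i, ∃ k : ℤ, (x : ι → ℝ) i = (k : ℝ) := by
    intro i
    obtain ⟨k, hk⟩ := (b.mem_span_iff_repr_mem ℤ _).mp hmem i
    exact ⟨k, by simpa [b] using hk.symm⟩
  choose v hv using hint
  refine ⟨v, ?_, ?_⟩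
  · intro hv0
    apply hx0
    have : (x : ι → ℝ) = 0 := by
      funext i; rw [hv i, congrFun hv0 i]; simp
    exact Subtype.ext this
  · intro i
    have := hxs i (Set.mem_univ i)
    simp only [Set.mem_Ioo] at this
    have hf : f (x : ι → ℝ) i = ∑ j, T i j * (v j : ℝ) := by
      rw [show f = Matrix.toLin' T from rfl]
      rw [Matrix.toLin'_apply]
      simp [Matrix.mulVec, dotProduct, hv]
    rw [hf] at this
    rw [abs_lt]
    exact this

lemma dyson_kernel {n m : ℕ} (A : Matrix (Fin n) (Fin m) ℝ)
    (y : Fin n → ℤ) (p : Fin m → ℤ) (i₀ : Fin n)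
    (hmax : ∀ i, |y i| ≤ |y i₀|) (hy0 : y i₀ ≠ 0)
    (U : ℝ) (hU : 0 ≤ U) (hyp : ∀ j, |(∑ i, A i j * (y i : ℝ)) - (p j : ℝ)| ≤ U)
    (X V : ℝ) (hX : 0 < X) (hV : 0 < V) (hV1 : V ≤ 1)
    (hprod : (|y i₀| : ℝ) < X ^ m * V ^ (n - 1)) :
    ∃ x : Fin m → ℤ, x ≠ 0 ∧ (∀ j, (|x j| : ℝ) ≤ X) ∧
      ∀ i, nearInt (∑ j, A i j * (x j : ℝ)) ≤ m * U * X / (|y i₀| : ℝ) + n * V := by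
  classical
  -- the matrix of linear forms
  set C : Matrix (Fin n) (Fin m) ℝ :=
    fun i j => if i = i₀ then (p j : ℝ) else A i j with hC
  set E : Matrix (Fin n) (Fin n) ℝ :=
    Matrix.updateRow (1 : Matrix (Fin n) (Fin n) ℝ) i₀ (fun i' => (y i' : ℝ)) with hE
  set T : Matrix (Fin m ⊕ Fin n) (Fin m ⊕ Fin n) ℝ :=
    Matrix.fromBlocks 1 0 C (-E) with hT
  have hdetE : E.det = (y i₀ : ℝ) := by
    have h1 : E.det = Eᵀ.det := (Matrix.det_transpose E).symm
    have h2 : Eᵀ = Matrix.updateCol (1 : Matrix (Fin n) (Fin n) ℝ) i₀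
        (fun i' => (y i' : ℝ)) := by
      rw [hE, ← Matrix.updateCol_transpose, Matrix.transpose_one]
    rw [h1, h2, ← Matrix.cramer_apply, Matrix.cramer_one]
    rfl
  have hdetT : T.det = (-1) ^ n * (y i₀ : ℝ) := by
    rw [hT, Matrix.det_fromBlocks_zero₁₂, Matrix.det_one, one_mul, Matrix.det_neg, hdetE]
    simp
  have hdetTne : T.det ≠ 0 := by
    rw [hdetT]
    exact mul_ne_zero (pow_ne_zero _ (neg_ne_zero.mpr one_ne_zero))
      (Int.cast_ne_zero.mpr hy0)
  have habs : |T.det| = (|y i₀| : ℝ) := by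
    rw [hdetT, abs_mul, abs_pow, abs_neg, abs_one, one_pow, one_mul]
  -- the bounds
  set c : Fin m ⊕ Fin n → ℝ := Sum.elim (fun _ => X) (fun i => if i = i₀ then 1 else V) with hc
  have hcpos : ∀ k, 0 < c k := by
    rintro (j | i)
    · exact hX
    · simp only [hc, Sum.elim_inr]
      split <;> [exact one_pos; exact hV]
  have hprodc : ∏ k, c k = X ^ m * V ^ (n - 1) := by
    rw [Fintype.prod_sum_type]
    simp only [hc, Sum.elim_inl, Sum.elim_inr]
    rw [Finset.prod_const, Finset.card_univ, Fintype.card_fin]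
    congr 1
    rw [← Finset.mul_prod_erase Finset.univ _ (Finset.mem_univ i₀), if_pos rfl, one_mul,
      Finset.prod_congr rfl (fun i hi => if_neg (Finset.ne_of_mem_erase hi)),
      Finset.prod_const, Finset.card_erase_of_mem (Finset.mem_univ i₀), Finset.card_univ,
      Fintype.card_fin]
  obtain ⟨v, hv0, hvlt⟩ := minkowski_forms T hdetTne c hcpos (by rw [habs, hprodc]; exact hprod)
  set x : Fin m → ℤ := fun j => v (Sum.inl j) with hx
  set z : Fin n → ℤ := fun i => v (Sum.inr i) with hz
  -- evaluate the linear forms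
  have hrow1 : ∀ j, ∑ l, T (Sum.inl j) l * (v l : ℝ) = (x j : ℝ) := by
    intro j
    rw [Fintype.sum_sum_type]
    simp [hT, Matrix.fromBlocks_apply₁₁, Matrix.fromBlocks_apply₁₂, Matrix.one_apply,
      ite_mul, hx]
  have hrow2 : ∀ i, i ≠ i₀ → ∑ l, T (Sum.inr i) l * (v l : ℝ) =
      (∑ j, A i j * (x j : ℝ)) - (z i : ℝ) := by
    intro i hi
    rw [Fintype.sum_sum_type]
    simp only [hT, Matrix.fromBlocks_apply₂₁, Matrix.fromBlocks_apply₂₂]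
    simp [hT, Matrix.fromBlocks_apply₂₁, Matrix.fromBlocks_apply₂₂, hC,
      Matrix.neg_apply, hE, Matrix.updateRow_apply, hi, Matrix.one_apply,
      ite_mul, hz, sub_eq_add_neg, hx]
  have hrow3 : ∑ l, T (Sum.inr i₀) l * (v l : ℝ) =
      (∑ j, (p j : ℝ) * (x j : ℝ)) - ∑ i, (y i : ℝ) * (z i : ℝ) := by
    rw [Fintype.sum_sum_type]
    simp only [hT, Matrix.fromBlocks_apply₂₁, Matrix.fromBlocks_apply₂₂]
    simp [hT, Matrix.fromBlocks_apply₂₁, Matrix.fromBlocks_apply₂₂, hC,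
      Matrix.neg_apply, hE, Matrix.updateRow_self, hx, hz, sub_eq_add_neg,
      Finset.sum_neg_distrib, neg_mul]
  -- basic bounds from Minkowski
  have hxlt : ∀ j, |(x j : ℝ)| < X := by
    intro j
    have h := hvlt (Sum.inl j)
    rw [hrow1 j] at h
    simpa [hc] using h
  have hLi : ∀ i, i ≠ i₀ → |(∑ j, A i j * (x j : ℝ)) - (z i : ℝ)| < V := by
    intro i hi
    have h := hvlt (Sum.inr i)
    rw [hrow2 i hi] at h
    simpa [hc, hi] using h
  -- the integer linear form vanishes
  set Nz : ℤ := (∑ j, p j * x j) - ∑ i, y i * z i with hNz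
  have hNcast : ((Nz : ℤ) : ℝ) = (∑ j, (p j : ℝ) * (x j : ℝ)) - ∑ i, (y i : ℝ) * (z i : ℝ) := by
    rw [hNz]; push_cast; ring
  have hNzero : Nz = 0 := by
    have h := hvlt (Sum.inr i₀)
    rw [hrow3] at h
    simp only [hc, Sum.elim_inr, if_pos rfl] at h
    rw [← hNcast] at h
    have h2 : |Nz| < 1 := by exact_mod_cast (by rwa [← Int.cast_abs] at h : ((|Nz| : ℤ) : ℝ) < 1)
    exact Int.abs_lt_one_iff.mp h2
  have hN0 : (∑ j, (p j : ℝ) * (x j : ℝ)) - ∑ i, (y i : ℝ) * (z i : ℝ) = 0 := by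
    rw [← hNcast, hNzero]; simp
  -- nonvanishing of x
  have hxne : x ≠ 0 := by
    intro hx0
    have hzi : ∀ i, i ≠ i₀ → z i = 0 := by
      intro i hi
      have h := hLi i hi
      have hsum0 : (∑ j, A i j * (x j : ℝ)) = 0 := by
        apply Finset.sum_eq_zero
        intro j _
        rw [show x j = 0 from congrFun hx0 j]
        simp
      rw [hsum0, zero_sub, abs_neg] at h
      have h1 : ((|z i| : ℤ) : ℝ) < 1 := by
        rw [Int.cast_abs]
        exact lt_of_lt_of_le h hV1
      have h2 : |z i| < 1 := by exact_mod_cast h1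
      exact Int.abs_lt_one_iff.mp h2
    have hzi₀ : z i₀ = 0 := by
      have hsum : ∑ i, y i * z i = y i₀ * z i₀ := by
        apply Finset.sum_eq_single i₀
        · intro i _ hi
          rw [hzi i hi, mul_zero]
        · intro h; exact absurd (Finset.mem_univ i₀) h
      have hps : ∑ j, p j * x j = 0 := by
        apply Finset.sum_eq_zero
        intro j _
        rw [show x j = 0 from congrFun hx0 j, mul_zero]
      have hNz' := hNzero
      rw [hNz, hps, hsum, zero_sub, neg_eq_zero] at hNz'
      exact (mul_eq_zero.mp hNz').resolve_left hy0
    apply hv0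
    funext k
    cases k with
    | inl j => exact congrFun hx0 j
    | inr i =>
      by_cases hi : i = i₀
      · rw [hi]; exact hzi₀
      · exact hzi i hi
  -- the key identity for the row i₀
  have hsum_split : ∑ i, (y i : ℝ) * ((∑ j, A i j * (x j : ℝ)) - (z i : ℝ))
      = (∑ j, ((∑ i, A i j * (y i : ℝ)) - (p j : ℝ)) * (x j : ℝ))
        + ((∑ j, (p j : ℝ) * (x j : ℝ)) - ∑ i, (y i : ℝ) * (z i : ℝ)) := by
    have h1 : ∑ i, (y i : ℝ) * ((∑ j, A i j * (x j : ℝ)) - (z i : ℝ))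
        = (∑ i, (y i : ℝ) * ∑ j, A i j * (x j : ℝ)) - ∑ i, (y i : ℝ) * (z i : ℝ) := by
      simp_rw [mul_sub]
      rw [Finset.sum_sub_distrib]
    have h2 : ∑ j, ((∑ i, A i j * (y i : ℝ)) - (p j : ℝ)) * (x j : ℝ)
        = (∑ j, (∑ i, A i j * (y i : ℝ)) * (x j : ℝ)) - ∑ j, (p j : ℝ) * (x j : ℝ) := by
      simp_rw [sub_mul]
      rw [Finset.sum_sub_distrib]
    have hswap : ∑ j, (∑ i, A i j * (y i : ℝ)) * (x j : ℝ)
        = ∑ i, (y i : ℝ) * ∑ j, A i j * (x j : ℝ) := by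
      simp_rw [Finset.sum_mul, Finset.mul_sum]
      rw [Finset.sum_comm]
      exact Finset.sum_congr rfl fun i _ => Finset.sum_congr rfl fun j _ => by ring
    rw [h1, h2, hswap]
    ring
  have hkey : (y i₀ : ℝ) * ((∑ j, A i₀ j * (x j : ℝ)) - (z i₀ : ℝ))
      = (∑ j, ((∑ i, A i j * (y i : ℝ)) - (p j : ℝ)) * (x j : ℝ))
        - ∑ i ∈ Finset.univ.erase i₀, (y i : ℝ) * ((∑ j, A i j * (x j : ℝ)) - (z i : ℝ)) := by
    have h := Finset.add_sum_erase Finset.univ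
      (fun i => (y i : ℝ) * ((∑ j, A i j * (x j : ℝ)) - (z i : ℝ))) (Finset.mem_univ i₀)
    beta_reduce at h
    rw [hsum_split, hN0, add_zero] at h
    linarith [h]
  -- bound on the row i₀
  have hy₀pos : (0:ℝ) < |(y i₀ : ℝ)| := abs_pos.mpr (Int.cast_ne_zero.mpr hy0)
  have hy₀one : (1:ℝ) ≤ |(y i₀ : ℝ)| := by
    rw [← Int.cast_abs]
    exact_mod_cast Int.one_le_abs hy0
  have hb1 : |∑ j, ((∑ i, A i j * (y i : ℝ)) - (p j : ℝ)) * (x j : ℝ)| ≤ m * U * X := by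
    calc |∑ j, ((∑ i, A i j * (y i : ℝ)) - (p j : ℝ)) * (x j : ℝ)|
        ≤ ∑ j, |((∑ i, A i j * (y i : ℝ)) - (p j : ℝ)) * (x j : ℝ)| :=
          Finset.abs_sum_le_sum_abs _ _
      _ ≤ ∑ _j : Fin m, U * X := by
          apply Finset.sum_le_sum
          intro j _
          rw [abs_mul]
          exact mul_le_mul (hyp j) (hxlt j).le (abs_nonneg _) hU
      _ = m * U * X := by
          rw [Finset.sum_const, Finset.card_univ, Fintype.card_fin, nsmul_eq_mul]
          ring
  have hb2 : |∑ i ∈ Finset.univ.erase i₀, (y i : ℝ) * ((∑ j, A i j * (x j : ℝ)) - (z i : ℝ))|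
      ≤ (n - 1 : ℕ) * (|(y i₀ : ℝ)| * V) := by
    calc |∑ i ∈ Finset.univ.erase i₀, (y i : ℝ) * ((∑ j, A i j * (x j : ℝ)) - (z i : ℝ))|
        ≤ ∑ i ∈ Finset.univ.erase i₀,
            |(y i : ℝ) * ((∑ j, A i j * (x j : ℝ)) - (z i : ℝ))| := Finset.abs_sum_le_sum_abs _ _
      _ ≤ ∑ _i ∈ Finset.univ.erase i₀, |(y i₀ : ℝ)| * V := by
          apply Finset.sum_le_sum
          intro i hi
          rw [abs_mul]
          have hyi : |(y i : ℝ)| ≤ |(y i₀ : ℝ)| := by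
            rw [← Int.cast_abs, ← Int.cast_abs]
            exact_mod_cast hmax i
          exact mul_le_mul hyi (hLi i (Finset.ne_of_mem_erase hi)).le (abs_nonneg _)
            (abs_nonneg _)
      _ = (n - 1 : ℕ) * (|(y i₀ : ℝ)| * V) := by
          rw [Finset.sum_const, Finset.card_erase_of_mem (Finset.mem_univ i₀),
            Finset.card_univ, Fintype.card_fin, nsmul_eq_mul]
  have hAxi₀ : |(∑ j, A i₀ j * (x j : ℝ)) - (z i₀ : ℝ)|
      ≤ m * U * X / |(y i₀ : ℝ)| + (n - 1 : ℕ) * V := by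
    have hmul : |(y i₀ : ℝ)| * |(∑ j, A i₀ j * (x j : ℝ)) - (z i₀ : ℝ)|
        ≤ m * U * X + (n - 1 : ℕ) * (|(y i₀ : ℝ)| * V) := by
      rw [← abs_mul, hkey]
      calc |(∑ j, ((∑ i, A i j * (y i : ℝ)) - (p j : ℝ)) * (x j : ℝ))
          - ∑ i ∈ Finset.univ.erase i₀, (y i : ℝ) * ((∑ j, A i j * (x j : ℝ)) - (z i : ℝ))|
          ≤ |∑ j, ((∑ i, A i j * (y i : ℝ)) - (p j : ℝ)) * (x j : ℝ)|
            + |∑ i ∈ Finset.univ.erase i₀,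
                (y i : ℝ) * ((∑ j, A i j * (x j : ℝ)) - (z i : ℝ))| := abs_sub _ _
        _ ≤ m * U * X + (n - 1 : ℕ) * (|(y i₀ : ℝ)| * V) := add_le_add hb1 hb2
    rw [div_add' _ _ _ (ne_of_gt hy₀pos), le_div_iff₀ hy₀pos]
    calc |(∑ j, A i₀ j * (x j : ℝ)) - (z i₀ : ℝ)| * |(y i₀ : ℝ)|
        = |(y i₀ : ℝ)| * |(∑ j, A i₀ j * (x j : ℝ)) - (z i₀ : ℝ)| := by ring
      _ ≤ m * U * X + (n - 1 : ℕ) * (|(y i₀ : ℝ)| * V) := hmul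
      _ = m * U * X + (n - 1 : ℕ) * V * |(y i₀ : ℝ)| := by ring
  refine ⟨x, hxne, fun j => (hxlt j).le, ?_⟩
  intro i
  have hnn : 0 ≤ m * U * X / |(y i₀ : ℝ)| := by positivity
  have hn1 : (1:ℝ) ≤ n := by
    have : 0 < n := i.pos
    exact_mod_cast this
  by_cases hi : i = i₀
  · subst hi
    refine (nearInt_le_abs_sub _ (z i)).trans (hAxi₀.trans ?_)
    have hcast : ((n - 1 : ℕ) : ℝ) ≤ n := by
      have : (n - 1 : ℕ) ≤ n := Nat.sub_le n 1
      exact_mod_cast this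
    have := mul_le_mul_of_nonneg_right hcast hV.le
    linarith
  · refine (nearInt_le_abs_sub _ (z i)).trans ((hLi i hi).le.trans ?_)
    nlinarith [hV.le, hn1, hnn]

def Good {n m : ℕ} (A : Matrix (Fin n) (Fin m) ℝ) (r : ℝ) : Prop :=
  ∀ X₀ : ℝ, ∃ X : ℝ, X₀ ≤ X ∧ MatSol A X r

lemma MatSol.one_le_X {n m : ℕ} {A : Matrix (Fin n) (Fin m) ℝ} {X w : ℝ}
    (h : MatSol A X w) : 1 ≤ X := by
  obtain ⟨x, hx0, hb, -⟩ := h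
  obtain ⟨j, hj⟩ := Function.ne_iff.mp hx0
  refine le_trans ?_ (hb j)
  have : (1 : ℤ) ≤ |x j| := Int.one_le_abs hj
  exact_mod_cast this

lemma Good.mono {n m : ℕ} {A : Matrix (Fin n) (Fin m) ℝ} {r r' : ℝ}
    (hr : r' ≤ r) (h : Good A r) : Good A r' := by
  intro X₀
  obtain ⟨X, hX, x, hx0, hb, hsol⟩ := h X₀
  have h1 : (1:ℝ) ≤ X := MatSol.one_le_X ⟨x, hx0, hb, hsol⟩
  exact ⟨X, hX, x, hx0, hb, fun i => (hsol i).trans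
    (Real.rpow_le_rpow_of_exponent_le h1 (by linarith))⟩

lemma Good.zero {n m : ℕ} (A : Matrix (Fin n) (Fin m) ℝ) (hm : 1 ≤ m) : Good A 0 := by
  intro X₀
  refine ⟨max X₀ 1, le_max_left _ _, Pi.single ⟨0, hm⟩ 1, ?_, ?_, ?_⟩
  · intro h
    have := congrFun h ⟨0, hm⟩
    simp [Pi.single_apply] at this
  · intro j
    have h1 : (1:ℝ) ≤ max X₀ 1 := le_max_right _ _
    have h0 : (0:ℝ) ≤ max X₀ 1 := by linarith
    by_cases h : j = ⟨0, hm⟩ <;> simp [Pi.single_apply, h] <;> linarith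
  · intro i
    rw [neg_zero, Real.rpow_zero]
    exact (nearInt_le_half _).trans (by norm_num)

lemma exists_argmax {n : ℕ} (y : Fin n → ℤ) (hy : y ≠ 0) :
    ∃ i₀, y i₀ ≠ 0 ∧ ∀ i, |y i| ≤ |y i₀| := by
  obtain ⟨i, hi⟩ := Function.ne_iff.mp hy
  have hne : (Finset.univ : Finset (Fin n)).Nonempty := ⟨i, Finset.mem_univ i⟩
  obtain ⟨i₀, -, hmax⟩ := Finset.exists_max_image Finset.univ (fun i => |y i|) hne
  refine ⟨i₀, ?_, fun i' => hmax i' (Finset.mem_univ i')⟩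
  have h1 : (1:ℤ) ≤ |y i| := Int.one_le_abs (by simpa using hi)
  have h2 := hmax i (Finset.mem_univ i)
  intro h0
  have h3 : (1:ℤ) ≤ |y i₀| := le_trans h1 h2
  rw [h0] at h3
  simp at h3

-- arithmetic helper: `w*(n-1) < m`
lemma w_mul_lt {n m : ℕ} (hn : 1 ≤ n) (hm : 1 ≤ m) {r w : ℝ} (hr : 0 ≤ r) (hw0 : 0 ≤ w)
    (hw : w < ((m:ℝ)*r + m - 1)/(((n:ℝ)-1)*r + n)) : w * ((n:ℝ)-1) < m := by
  have hn1 : (1:ℝ) ≤ n := by exact_mod_cast hn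
  have hm1 : (1:ℝ) ≤ m := by exact_mod_cast hm
  have hden : (0:ℝ) < ((n:ℝ)-1)*r + n := by nlinarith
  rw [div_eq_inv_mul] at hw
  have hw' : w * (((n:ℝ)-1)*r + n) < (m:ℝ)*r + m - 1 := by
    rw [← lt_div_iff₀ hden] at *
    rw [div_eq_inv_mul]
    exact hw
  nlinarith [mul_nonneg hw0 hr, mul_nonneg (mul_nonneg hw0 hr) (sub_nonneg.mpr hn1)]

-- helper for rpow: if `Y ≥ K ^ (1/e)`, `0 ≤ K`, `0 < e`, `0 ≤ Y` then `K ≤ Y ^ e`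
lemma le_rpow_of_rpow_inv_le {K Y e : ℝ} (hK : 0 ≤ K) (he : 0 < e) (hY : 0 ≤ Y)
    (h : K ^ (1/e) ≤ Y) : K ≤ Y ^ e := by
  have h1 : (K ^ (1/e)) ^ e ≤ Y ^ e :=
    Real.rpow_le_rpow (Real.rpow_nonneg hK _) h he.le
  rwa [← Real.rpow_mul hK, one_div, inv_mul_cancel₀ he.ne', Real.rpow_one] at h1

-- transference, case of an exact integer solution of the transposed system
lemma exact_case {n m : ℕ} (hn : 1 ≤ n) (hm : 1 ≤ m) (A : Matrix (Fin n) (Fin m) ℝ)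
    (y : Fin n → ℤ) (hy : y ≠ 0)
    (hexact : ∀ j, nearInt (∑ i, A i j * (y i : ℝ)) = 0)
    {w : ℝ} (hw0 : 0 ≤ w) (hwm : w * ((n:ℝ)-1) < m) : Good A w := by
  obtain ⟨i₀, hy0, hmax⟩ := exists_argmax y hy
  set Y : ℝ := (|(y i₀ : ℝ)|) with hY
  have hY1 : 1 ≤ Y := by
    rw [hY, ← Int.cast_abs]
    exact_mod_cast Int.one_le_abs hy0
  have hn1 : (1:ℝ) ≤ n := by exact_mod_cast hn
  set e : ℝ := (m:ℝ) - w * ((n:ℝ)-1) with he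
  have hepos : 0 < e := by rw [he]; linarith
  intro X₀
  set K : ℝ := (n:ℝ)^(n-1) * (Y+1) with hK
  have hKpos : 0 < K := by
    apply mul_pos (pow_pos (by linarith) _)
    linarith
  set X : ℝ := max (max X₀ 1) (K ^ (1/e)) with hXdef
  have hX1 : 1 ≤ X := le_trans (le_max_right X₀ 1) (le_max_left _ _)
  have hXpos : 0 < X := lt_of_lt_of_le one_pos hX1
  set V : ℝ := X ^ (-w) / n with hV
  have hXw_pos : 0 < X ^ (-w) := Real.rpow_pos_of_pos hXpos _
  have hXw_le1 : X ^ (-w) ≤ 1 :=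
    Real.rpow_le_one_of_one_le_of_nonpos hX1 (by linarith)
  have hVpos : 0 < V := div_pos hXw_pos (by linarith)
  have hV1 : V ≤ 1 := by
    rw [hV]
    calc X ^ (-w) / n ≤ X ^ (-w) / 1 := by
          apply div_le_div_of_nonneg_left hXw_pos.le ?_ hn1
          · exact one_pos
      _ ≤ 1 := by rw [div_one]; exact hXw_le1
  have hprod : Y < X ^ m * V ^ (n - 1) := by
    have hXe : K ≤ X ^ e :=
      le_rpow_of_rpow_inv_le hKpos.le hepos hXpos.le
        (le_trans (le_max_right _ _) le_rfl)
    have h2 : X ^ m * (X ^ (-w)) ^ (n-1) = X ^ e := by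
      rw [← Real.rpow_natCast (X ^ (-w)) (n-1), ← Real.rpow_mul hXpos.le,
        ← Real.rpow_natCast X m, ← Real.rpow_add hXpos, he]
      congr 1
      have hcast : ((n-1 : ℕ) : ℝ) = (n:ℝ) - 1 := by
        rw [Nat.cast_sub hn]; simp
      rw [hcast]; ring
    have h1 : X ^ m * V ^ (n-1) = X ^ e / (n:ℝ)^(n-1) := by
      rw [hV, div_pow, ← h2]; ring
    rw [h1, lt_div_iff₀ (pow_pos (by linarith : (0:ℝ) < n) _)]
    calc Y * (n:ℝ)^(n-1) ≤ (n:ℝ)^(n-1) * Y := by ring_nf; exact le_rfl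
      _ < K := by rw [hK]; nlinarith [pow_pos (show (0:ℝ) < n by linarith) (n-1)]
      _ ≤ X ^ e := hXe
  obtain ⟨x, hx0, hxb, hxs⟩ := dyson_kernel A y (fun j => round (∑ i, A i j * (y i : ℝ))) i₀
    hmax hy0 0 le_rfl (fun j => le_of_eq (hexact j)) X V hXpos hVpos hV1 hprod
  refine ⟨X, le_trans (le_max_left X₀ 1) (le_max_left _ _), x, hx0, hxb, ?_⟩
  intro i
  refine (hxs i).trans ?_
  rw [hV]
  have hnne : (n:ℝ) ≠ 0 := by linarith
  rw [mul_zero, zero_mul, zero_div, zero_add, mul_div_cancel₀ _ hnne]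

-- transference, main case: arbitrarily large solutions of the transposed system
set_option maxHeartbeats 1000000 in
lemma main_case {n m : ℕ} (hn : 1 ≤ n) (hm : 1 ≤ m) (A : Matrix (Fin n) (Fin m) ℝ)
    (r : ℝ) (hr : 0 ≤ r)
    (hgen : ∀ Y₀ : ℝ, ∃ (y : Fin n → ℤ) (i₀ : Fin n), y i₀ ≠ 0 ∧ (∀ i, |y i| ≤ |y i₀|) ∧
      Y₀ ≤ (|(y i₀ : ℝ)|) ∧ ∀ j, nearInt (∑ i, A i j * (y i : ℝ)) ≤ (|(y i₀ : ℝ)|) ^ (-r))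
    {w : ℝ} (hw0 : 0 ≤ w)
    (hw : w < ((m:ℝ)*r + m - 1)/(((n:ℝ)-1)*r + n)) : Good A w := by
  have hn1 : (1:ℝ) ≤ n := by exact_mod_cast hn
  have hm1 : (1:ℝ) ≤ m := by exact_mod_cast hm
  set d : ℝ := (m:ℝ) + n - 1 with hd
  have hdpos : 0 < d := by rw [hd]; linarith
  set den : ℝ := ((n:ℝ)-1)*r + n with hden
  set num : ℝ := (m:ℝ)*r + m - 1 with hnum
  have hdenpos : 0 < den := by rw [hden]; nlinarith
  have hnum0 : 0 ≤ num := by rw [hnum]; nlinarith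
  set aa : ℝ := den / d with haa
  set bb : ℝ := num / d with hbb
  have haapos : 0 < aa := div_pos hdenpos hdpos
  have hbb0 : 0 ≤ bb := div_nonneg hnum0 hdpos.le
  have habsum : aa + bb = 1 + r := by
    rw [haa, hbb, hden, hnum, hd]
    rw [← add_div, div_eq_iff (ne_of_gt (by linarith))]
    ring
  have hab1 : aa * m - bb * ((n:ℝ)-1) = 1 := by
    rw [haa, hbb, hden, hnum, hd]
    rw [div_mul_eq_mul_div, div_mul_eq_mul_div, div_sub_div_same,
      div_eq_iff (ne_of_gt (by linarith))]
    ring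
  have hwab : w * aa < bb := by
    have h2 : w * den < num := by rwa [lt_div_iff₀ hdenpos] at hw
    have haad : aa * d = den := by rw [haa]; field_simp
    have hbbd : bb * d = num := by rw [hbb]; field_simp
    have h3 : (w * aa) * d < bb * d := by
      rw [mul_assoc, haad, hbbd]; exact h2
    exact lt_of_mul_lt_mul_right h3 hdpos.le
  set ε : ℝ := (bb - w*aa)/(2*(1+w)) with hε
  have hεpos : 0 < ε := div_pos (by linarith) (by linarith)
  have hgap : bb - (w*(aa+ε) + ε) = (bb - w*aa)/2 := by
    rw [hε]; field_simp; ring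
  set g : ℝ := (bb - w*aa)/2 with hg
  have hgpos : 0 < g := by rw [hg]; linarith
  intro X₀
  set Y₀ : ℝ := max (max ((max X₀ 1) ^ (1/(aa+ε))) 2) (((m:ℝ)+n) ^ (1/g)) with hY₀
  obtain ⟨y, i₀, hy0, hmax, hYbig, hsol⟩ := hgen Y₀
  set Y : ℝ := (|(y i₀ : ℝ)|) with hYd
  have hY2 : 2 ≤ Y := le_trans (le_trans (le_max_right _ 2) (le_max_left _ _)) hYbig
  have hY1 : 1 < Y := by linarith
  have hYpos : 0 < Y := by linarith
  set X : ℝ := Y ^ (aa+ε) with hX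
  set V : ℝ := Y ^ (-bb) with hV
  set U : ℝ := Y ^ (-r) with hU
  have hXpos : 0 < X := Real.rpow_pos_of_pos hYpos _
  have hVpos : 0 < V := Real.rpow_pos_of_pos hYpos _
  have hUpos : 0 < U := Real.rpow_pos_of_pos hYpos _
  have hV1 : V ≤ 1 := Real.rpow_le_one_of_one_le_of_nonpos hY1.le (by linarith)
  have hXX₀ : X₀ ≤ X := by
    have h1 : max X₀ 1 ≤ X := by
      rw [hX]
      refine le_rpow_of_rpow_inv_le (le_trans zero_le_one (le_max_right X₀ 1))
        (by linarith) hYpos.le ?_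
      exact le_trans (le_trans (le_max_left _ 2) (le_max_left _ _)) hYbig
    exact le_trans (le_max_left X₀ 1) h1
  -- cast of n-1
  have hcast : ((n-1 : ℕ) : ℝ) = (n:ℝ) - 1 := by rw [Nat.cast_sub hn]; simp
  have hprod : Y < X ^ m * V ^ (n - 1) := by
    have h2 : X ^ m * V ^ (n-1) = Y ^ (1 + ε * m) := by
      rw [hX, hV, ← Real.rpow_natCast (Y ^ (aa+ε)) m, ← Real.rpow_mul hYpos.le,
        ← Real.rpow_natCast (Y ^ (-bb)) (n-1), ← Real.rpow_mul hYpos.le,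
        ← Real.rpow_add hYpos, hcast]
      congr 1
      linear_combination hab1
    rw [h2]
    calc Y = Y ^ (1:ℝ) := (Real.rpow_one Y).symm
      _ < Y ^ (1 + ε * m) := by
          apply Real.rpow_lt_rpow_of_exponent_lt hY1
          nlinarith
  obtain ⟨x, hx0, hxb, hxs⟩ := dyson_kernel A y (fun j => round (∑ i, A i j * (y i : ℝ))) i₀
    hmax hy0 U hUpos.le (fun j => hsol j) X V hXpos hVpos hV1 hprod
  refine ⟨X, hXX₀, x, hx0, hxb, ?_⟩
  intro i
  refine (hxs i).trans ?_
  -- the final estimate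
  have hXw : X ^ (-w) = Y ^ (-(w*(aa+ε))) := by
    rw [hX, ← Real.rpow_mul hYpos.le]
    congr 1
    ring
  have h3 : U * X / Y = Y ^ (ε - bb) := by
    rw [hU, hX, div_eq_iff hYpos.ne', ← Real.rpow_add hYpos, ← Real.rpow_add_one hYpos.ne']
    congr 1
    linear_combination habsum
  have hterm1 : (m:ℝ) * U * X / Y = m * Y ^ (ε - bb) := by
    rw [show (m:ℝ) * U * X / Y = m * (U * X / Y) from by ring, h3]
  have hterm2 : (n:ℝ) * V ≤ n * Y ^ (ε - bb) := by
    apply mul_le_mul_of_nonneg_left _ (by linarith : (0:ℝ) ≤ n)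
    rw [hV]
    exact Real.rpow_le_rpow_of_exponent_le hY1.le (by linarith)
  have hfin : ((m:ℝ) + n) * Y ^ (ε - bb) ≤ Y ^ (-(w*(aa+ε))) := by
    have hmn : ((m:ℝ) + n) ≤ Y ^ g := by
      refine le_rpow_of_rpow_inv_le (by linarith) hgpos hYpos.le ?_
      exact le_trans (le_max_right _ _) hYbig
    calc ((m:ℝ) + n) * Y ^ (ε - bb) ≤ Y ^ g * Y ^ (ε - bb) :=
          mul_le_mul_of_nonneg_right hmn (Real.rpow_nonneg hYpos.le _)
      _ = Y ^ (g + (ε - bb)) := (Real.rpow_add hYpos _ _).symm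
      _ = Y ^ (-(w*(aa+ε))) := by congr 1; rw [hg] at hgap ⊢; linarith
  rw [hXw]
  calc (m:ℝ) * U * X / Y + n * V ≤ m * Y ^ (ε - bb) + n * Y ^ (ε - bb) := by
        rw [hterm1]
        exact add_le_add_right hterm2 _
    _ = ((m:ℝ) + n) * Y ^ (ε - bb) := by ring
    _ ≤ Y ^ (-(w*(aa+ε))) := hfin

-- generator for r = 0 : trivial large solutions
lemma gen_zero {n m : ℕ} (hn : 1 ≤ n) (A : Matrix (Fin n) (Fin m) ℝ) :
    ∀ Y₀ : ℝ, ∃ (y : Fin n → ℤ) (i₀ : Fin n), y i₀ ≠ 0 ∧ (∀ i, |y i| ≤ |y i₀|) ∧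
      Y₀ ≤ (|(y i₀ : ℝ)|) ∧ ∀ j, nearInt (∑ i, A i j * (y i : ℝ)) ≤ (|(y i₀ : ℝ)|) ^ (-(0:ℝ)) := by
  intro Y₀
  set B : ℤ := max 1 ⌈Y₀⌉ with hB
  have hB1 : 1 ≤ B := le_max_left _ _
  refine ⟨Pi.single ⟨0, hn⟩ B, ⟨0, hn⟩, ?_, ?_, ?_, ?_⟩
  · simp [Pi.single_apply]; omega
  · intro i
    by_cases h : i = ⟨0, hn⟩ <;> simp [Pi.single_apply, h] <;> omega
  · rw [Pi.single_eq_same]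
    calc Y₀ ≤ (⌈Y₀⌉ : ℝ) := Int.le_ceil Y₀
      _ ≤ (B : ℝ) := by exact_mod_cast le_max_right 1 ⌈Y₀⌉
      _ ≤ |(B : ℝ)| := le_abs_self _
  · intro j
    rw [neg_zero, Real.rpow_zero]
    exact (nearInt_le_half _).trans (by norm_num)

-- generator in the absence of exact solutions, r > 0
lemma gen_nonexact {n m : ℕ} (hn : 1 ≤ n) (hm : 1 ≤ m) (A : Matrix (Fin n) (Fin m) ℝ)
    {r : ℝ} (hr : 0 < r) (hGood : Good Aᵀ r)
    (hnex : ¬ ∃ y : Fin n → ℤ, y ≠ 0 ∧ ∀ j, nearInt (∑ i, A i j * (y i : ℝ)) = 0) :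
    ∀ Y₀ : ℝ, ∃ (y : Fin n → ℤ) (i₀ : Fin n), y i₀ ≠ 0 ∧ (∀ i, |y i| ≤ |y i₀|) ∧
      Y₀ ≤ (|(y i₀ : ℝ)|) ∧ ∀ j, nearInt (∑ i, A i j * (y i : ℝ)) ≤ (|(y i₀ : ℝ)|) ^ (-r) := by
  intro Y₀
  classical
  push_neg at hnex
  set B : ℤ := max 1 ⌈Y₀⌉ with hB
  have hB1 : 1 ≤ B := le_max_left _ _
  set F : Finset (Fin n → ℤ) := Finset.Icc (fun _ => -B) (fun _ => B) with hF
  set F' : Finset (Fin n → ℤ) := F.filter (· ≠ 0) with hF'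
  have hmne : (Finset.univ : Finset (Fin m)).Nonempty := ⟨⟨0, hm⟩, Finset.mem_univ _⟩
  set g : (Fin n → ℤ) → ℝ :=
    fun y => Finset.sup' Finset.univ hmne (fun j => nearInt (∑ i, A i j * (y i : ℝ))) with hg
  have hgpos : ∀ y ∈ F', 0 < g y := by
    intro y hy
    have hy0 : y ≠ 0 := (Finset.mem_filter.mp hy).2
    obtain ⟨j, hj⟩ := hnex y hy0
    have h1 : nearInt (∑ i, A i j * (y i : ℝ)) ≤ g y := by
      exact Finset.le_sup' (fun j => nearInt (∑ i, A i j * (y i : ℝ))) (Finset.mem_univ j)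
    have h2 : 0 < nearInt (∑ i, A i j * (y i : ℝ)) :=
      lt_of_le_of_ne (nearInt_nonneg _) (Ne.symm hj)
    linarith
  obtain ⟨δ, hδpos, hδ⟩ : ∃ δ : ℝ, 0 < δ ∧ ∀ y ∈ F', δ ≤ g y := by
    rcases F'.eq_empty_or_nonempty with hFe | hFne
    · exact ⟨1, one_pos, by simp [hFe]⟩
    · exact ⟨F'.inf' hFne g, (Finset.lt_inf'_iff hFne).mpr hgpos,
        fun y hy => Finset.inf'_le g hy⟩
  set X₁ : ℝ := max 1 ((1/δ + 1) ^ (1/r)) with hX₁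
  have hX₁1 : 1 ≤ X₁ := le_max_left _ _
  have hX₁pos : 0 < X₁ := lt_of_lt_of_le one_pos hX₁1
  have hX₁r : X₁ ^ (-r) < δ := by
    have h1 : 1/δ + 1 ≤ X₁ ^ r :=
      le_rpow_of_rpow_inv_le (by positivity) hr hX₁pos.le (le_max_right _ _)
    have h2 : 0 < X₁ ^ r := Real.rpow_pos_of_pos hX₁pos r
    rw [Real.rpow_neg hX₁pos.le]
    rw [inv_lt_iff_one_lt_mul₀ h2]
    have h3 : 1/δ < X₁ ^ r := by linarith
    rw [div_lt_iff₀ hδpos] at h3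
    linarith [h3]
  obtain ⟨X, hXX₁, ysol⟩ := hGood X₁
  obtain ⟨y, hy0, hyb, hysol⟩ := ysol
  have hX1 : 1 ≤ X := le_trans hX₁1 hXX₁
  have hXpos : 0 < X := lt_of_lt_of_le one_pos hX1
  have hsolA : ∀ j, nearInt (∑ i, A i j * (y i : ℝ)) ≤ X ^ (-r) := by
    intro j
    have := hysol j
    simpa [Matrix.transpose_apply] using this
  have hXr : X ^ (-r) ≤ X₁ ^ (-r) := by
    rw [Real.rpow_neg hXpos.le, Real.rpow_neg hX₁pos.le]
    apply inv_anti₀ (Real.rpow_pos_of_pos hX₁pos r)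
    exact Real.rpow_le_rpow hX₁pos.le hXX₁ hr.le
  have hnotF : y ∉ F := by
    intro hyF
    have hyF' : y ∈ F' := Finset.mem_filter.mpr ⟨hyF, hy0⟩
    have h1 : g y ≤ X ^ (-r) := Finset.sup'_le _ _ (fun j _ => hsolA j)
    have := hδ y hyF'
    linarith [hXr, hX₁r]
  obtain ⟨i₀, hyi₀, hmax⟩ := exists_argmax y hy0
  have hbig : (B : ℝ) + 1 ≤ (|(y i₀ : ℝ)|) := by
    by_contra hcon
    apply hnotF
    rw [hF, Finset.mem_Icc]
    push_neg at hcon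
    constructor <;> intro i <;> [skip; skip] <;>
    · have h1 : (|(y i : ℝ)|) ≤ (|(y i₀ : ℝ)|) := by
        rw [← Int.cast_abs, ← Int.cast_abs]
        exact_mod_cast hmax i
      have h2 : (|(y i : ℝ)|) < (B:ℝ) + 1 := lt_of_le_of_lt h1 hcon
      have h3 : |y i| < B + 1 := by exact_mod_cast (by rwa [← Int.cast_abs] at h2 :
        ((|y i| : ℤ) : ℝ) < (B:ℝ) + 1)
      have h4 := abs_lt.mp h3
      simp only [Pi.neg_apply]
      omega
  refine ⟨y, i₀, hyi₀, hmax, ?_, ?_⟩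
  · calc Y₀ ≤ (⌈Y₀⌉ : ℝ) := Int.le_ceil Y₀
      _ ≤ (B : ℝ) := by exact_mod_cast le_max_right 1 ⌈Y₀⌉
      _ ≤ (|(y i₀ : ℝ)|) := by linarith
  · intro j
    refine (hsolA j).trans ?_
    have hYle : (|(y i₀ : ℝ)|) ≤ X := by
      have := hyb i₀
      calc (|(y i₀ : ℝ)|) = ((|y i₀| : ℤ) : ℝ) := by rw [Int.cast_abs]
        _ ≤ X := by exact_mod_cast this
    have hY1 : (1:ℝ) ≤ (|(y i₀ : ℝ)|) := by
      rw [← Int.cast_abs]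
      exact_mod_cast Int.one_le_abs hyi₀
    have hYpos : (0:ℝ) < (|(y i₀ : ℝ)|) := by linarith
    rw [Real.rpow_neg hXpos.le, Real.rpow_neg hYpos.le]
    apply inv_anti₀ (Real.rpow_pos_of_pos hYpos r)
    exact Real.rpow_le_rpow hYpos.le hYle hr.le

-- the full real-level transference
theorem transfer {n m : ℕ} (hn : 1 ≤ n) (hm : 1 ≤ m) (A : Matrix (Fin n) (Fin m) ℝ)
    {r : ℝ} (hr : 0 ≤ r) (hGood : Good Aᵀ r) {w : ℝ} (hw0 : 0 ≤ w)
    (hw : w < ((m:ℝ)*r + m - 1)/(((n:ℝ)-1)*r + n)) : Good A w := by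
  rcases hr.eq_or_lt with hr0 | hrpos
  · subst hr0
    exact main_case hn hm A 0 le_rfl (gen_zero hn A) hw0 hw
  · by_cases hex : ∃ y : Fin n → ℤ, y ≠ 0 ∧ ∀ j, nearInt (∑ i, A i j * (y i : ℝ)) = 0
    · obtain ⟨y, hy0, hyex⟩ := hex
      exact exact_case hn hm A y hy0 hyex hw0 (w_mul_lt hn hm hr hw0 hw)
    · exact main_case hn hm A r hr (gen_nonexact hn hm A hrpos hGood hex) hw0 hw

lemma oexp_eq {n m : ℕ} (A : Matrix (Fin n) (Fin m) ℝ) :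
    oexp A = sSup {w : ℝ≥0∞ | ∃ r : ℝ, w = ENNReal.ofReal r ∧ Good A r} := rfl

-- n = 1 trick
lemma good_n1 {m : ℕ} (hm : 1 ≤ m) (A : Matrix (Fin 1) (Fin m) ℝ) {r : ℝ}
    (h : Good Aᵀ r) : Good A r := by
  intro X₀
  obtain ⟨X, hX, y, hy0, hyb, hysol⟩ := h X₀
  set j₀ : Fin m := ⟨0, hm⟩
  refine ⟨X, hX, Pi.single j₀ (y 0), ?_, ?_, ?_⟩
  · intro hcon
    apply hy0
    funext i
    have := congrFun hcon j₀
    rw [Pi.single_eq_same] at this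
    rw [Subsingleton.elim i 0]
    exact this
  · intro j
    by_cases hj : j = j₀
    · subst hj; rw [Pi.single_eq_same]; exact hyb 0
    · rw [Pi.single_eq_of_ne hj]
      simp only [Int.cast_zero, abs_zero]
      exact le_trans (abs_nonneg _) (hyb 0)
  · intro i
    have h1 := hysol j₀
    rw [Fin.sum_univ_one] at h1
    have h2 : ∑ j, A i j * ((Pi.single j₀ (y 0) : Fin m → ℤ) j : ℝ) = Aᵀ j₀ 0 * (y 0 : ℝ) := by
      rw [Finset.sum_eq_single j₀]
      · rw [Pi.single_eq_same, Matrix.transpose_apply, Subsingleton.elim i 0]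
      · intro j _ hj
        rw [Pi.single_eq_of_ne hj, Int.cast_zero, mul_zero]
      · intro hj; exact absurd (Finset.mem_univ j₀) hj
    rw [h2]
    exact h1


end DysonAux

/-- Dyson's transference inequality:
`ω_{n,m}(A) ≥ (m ω_{m,n}(ᵗA) + m - 1) / ((n - 1) ω_{m,n}(ᵗA) + n)`. -/
theorem dyson_transference (n m : ℕ) (A : Matrix (Fin n) (Fin m) ℝ) :
    oexp A ≥ ((m : ℝ≥0∞) * oexp Aᵀ + m - 1) / (((n : ℝ≥0∞) - 1) * oexp Aᵀ + n) := by
  -- trivial case m = 0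
  rcases Nat.eq_zero_or_pos m with hm0 | hm
  · subst hm0
    simp only [Nat.cast_zero, zero_mul, zero_add, zero_tsub, ENNReal.zero_div, ge_iff_le]
    exact zero_le'
  -- trivial case n = 0
  rcases Nat.eq_zero_or_pos n with hn0 | hn
  · subst hn0
    have htop : oexp A = ⊤ := by
      rw [oexp_eq, sSup_eq_top]
      intro b hb
      refine ⟨ENNReal.ofReal (b.toReal + 1), ⟨b.toReal + 1, rfl, ?_⟩, ?_⟩
      · intro X₀
        refine ⟨max X₀ 1, le_max_left _ _, Pi.single ⟨0, hm⟩ 1, ?_, ?_, fun i => i.elim0⟩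
        · intro hcon
          have := congrFun hcon ⟨0, hm⟩
          simp [Pi.single_apply] at this
        · intro j
          have h1 : (1:ℝ) ≤ max X₀ 1 := le_max_right _ _
          have h0 : (0:ℝ) ≤ max X₀ 1 := by linarith
          by_cases hj : j = ⟨0, hm⟩ <;> simp [Pi.single_apply, hj] <;> linarith
      · calc b = ENNReal.ofReal b.toReal := (ENNReal.ofReal_toReal hb.ne).symm
          _ < ENNReal.ofReal (b.toReal + 1) := by
              rw [ENNReal.ofReal_lt_ofReal_iff (by positivity)]
              linarith [ENNReal.toReal_nonneg (a := b)]
    rw [htop]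
    exact le_top
  -- main case n, m ≥ 1
  set ω : ℝ≥0∞ := oexp Aᵀ with hω
  rcases eq_or_ne ω ⊤ with htop | hfin
  · rcases Nat.lt_or_ge n 2 with hn2 | hn2
    · -- n = 1
      have hn1 : n = 1 := by omega
      subst hn1
      have hle : oexp Aᵀ ≤ oexp A := by
        rw [oexp_eq, oexp_eq]
        apply sSup_le_sSup
        rintro w ⟨r, rfl, hr⟩
        exact ⟨r, rfl, good_n1 hm A hr⟩
      have hA : oexp A = ⊤ := top_unique (le_trans (le_of_eq htop.symm) hle)
      rw [hA]
      exact le_top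
    · -- n ≥ 2 : RHS = 0
      have h1 : ((n : ℝ≥0∞) - 1) ≠ 0 := by
        have h2 : (2 : ℝ≥0∞) ≤ n := by exact_mod_cast hn2
        intro hcon
        rw [tsub_eq_zero_iff_le] at hcon
        have := le_trans h2 hcon
        norm_num at this
      have hden : ((n : ℝ≥0∞) - 1) * ω + n = ⊤ := by
        rw [htop, ENNReal.mul_top h1, top_add]
      rw [hden, ENNReal.div_top]
      exact zero_le'
  · -- ω finite
    set c : ℝ := ω.toReal with hc
    have hc0 : 0 ≤ c := ENNReal.toReal_nonneg
    have hωc : ω = ENNReal.ofReal c := (ENNReal.ofReal_toReal hfin).symm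
    have hn1R : (1:ℝ) ≤ n := by exact_mod_cast hn
    have hm1R : (1:ℝ) ≤ m := by exact_mod_cast hm
    have hdenR : (0:ℝ) < ((n:ℝ)-1)*c + n := by nlinarith
    have claimA : ∀ r : ℝ, 0 ≤ r → r < c → Good Aᵀ r := by
      intro r hr0 hrc
      have h1 : ENNReal.ofReal r < ω := by
        rw [hωc]
        exact (ENNReal.ofReal_lt_ofReal_iff_of_nonneg hr0).mpr hrc
      rw [hω, oexp_eq] at h1
      obtain ⟨s, ⟨r', rfl, hr'⟩, hlt⟩ := lt_sSup_iff.mp h1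
      have hrr' : r < r' := by
        by_contra hcon
        push_neg at hcon
        exact absurd (ENNReal.ofReal_le_ofReal hcon) (not_le.mpr hlt)
      exact Good.mono (le_of_lt hrr') hr'
    have hnum : (m : ℝ≥0∞) * ω + m - 1 = ENNReal.ofReal ((m:ℝ)*c + m - 1) := by
      rw [hωc, show ((m:ℕ) : ℝ≥0∞) = ENNReal.ofReal (m:ℝ) from (ENNReal.ofReal_natCast m).symm,
        show (1:ℝ≥0∞) = ENNReal.ofReal 1 from ENNReal.ofReal_one.symm,
        ← ENNReal.ofReal_mul (by positivity), ← ENNReal.ofReal_add (by positivity)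
          (by positivity), ← ENNReal.ofReal_sub _ (by norm_num)]
    have hden : ((n : ℝ≥0∞) - 1) * ω + n = ENNReal.ofReal (((n:ℝ)-1)*c + n) := by
      rw [hωc, show ((n:ℕ) : ℝ≥0∞) = ENNReal.ofReal (n:ℝ) from (ENNReal.ofReal_natCast n).symm,
        show (1:ℝ≥0∞) = ENNReal.ofReal 1 from ENNReal.ofReal_one.symm,
        ← ENNReal.ofReal_sub _ (by norm_num),
        ← ENNReal.ofReal_mul (by linarith), ← ENNReal.ofReal_add
          (by nlinarith) (by positivity)]
    rw [hnum, hden, ← ENNReal.ofReal_div_of_pos hdenR]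
    apply le_of_forall_lt_imp_le_of_dense
    intro x hx
    have hxt : x ≠ ⊤ := (hx.trans ENNReal.ofReal_lt_top).ne
    set t : ℝ := x.toReal with htdef
    have ht0 : 0 ≤ t := ENNReal.toReal_nonneg
    have htD : t < ((m:ℝ)*c + m - 1) / (((n:ℝ)-1)*c + n) :=
      (ENNReal.lt_ofReal_iff_toReal_lt hxt).mp hx
    have hGoodA : Good A t := by
      by_cases hcase : t < ((m:ℝ)*0 + m - 1)/(((n:ℝ)-1)*0 + n)
      · exact transfer hn hm A le_rfl (Good.zero Aᵀ hn) ht0 hcase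
      · push_neg at hcase
        have hcpos : 0 < c := by
          rcases hc0.eq_or_lt with h | h
          · exfalso
            rw [← h] at htD
            exact absurd htD (not_lt.mpr hcase)
          · exact h
        have hcont : ContinuousAt (fun s : ℝ => ((m:ℝ)*s + m - 1)/(((n:ℝ)-1)*s + n)) c := by
          apply ContinuousAt.div
          · fun_prop
          · fun_prop
          · exact ne_of_gt hdenR
        rw [Metric.continuousAt_iff] at hcont
        obtain ⟨δ, hδpos, hδ⟩ := hcont (((m:ℝ)*c + m - 1) / (((n:ℝ)-1)*c + n) - t) (by linarith)
        set r : ℝ := c - min (δ/2) (c/2) with hrdef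
        have hminpos : 0 < min (δ/2) (c/2) := lt_min (by linarith) (by linarith)
        have hminle : min (δ/2) (c/2) ≤ c/2 := min_le_right _ _
        have hr0 : 0 ≤ r := by rw [hrdef]; linarith
        have hrc : r < c := by rw [hrdef]; linarith
        have hrd : dist r c < δ := by
          rw [Real.dist_eq, hrdef]
          have h2 : min (δ/2) (c/2) ≤ δ/2 := min_le_left _ _
          rw [show c - min (δ/2) (c/2) - c = -(min (δ/2) (c/2)) from by ring, abs_neg,
            abs_of_pos hminpos]
          linarith
        have h3 := hδ hrd
        rw [Real.dist_eq] at h3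
        have h4 := (abs_lt.mp h3).1
        have hfr : t < ((m:ℝ)*r + m - 1)/(((n:ℝ)-1)*r + n) := by linarith
        exact transfer hn hm A hr0 (claimA r hr0 hrc) ht0 hfr
    have hx_eq : x = ENNReal.ofReal t := (ENNReal.ofReal_toReal hxt).symm
    rw [hx_eq, oexp_eq]
    exact le_sSup ⟨t, rfl, hGoodA⟩
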